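/- Let E be a Banach space and let T : E → E be a bounded linear operator such that the kernel of T is finite-dimensional, the quotient space E / T[E] is finite-dimensional, and dim ker T = dim (E / T[E]) (i.e., T is a Fredholm operator of index 0). Then T lies in the closure of the set of invertible bounded linear operators on E, i.e., for every ε > 0 there is a bounded linear operator S on E with a bounded linear inverse such that ‖T − S‖ < ε. -/

import Mathlib

/-- Every Fredholm operator of index zero on a Banach space may be approximated
(in the operator norm) by invertible bounded operators. -/
theorem fredholm_index_zero_approx_invertible
    {𝕜 : Type*} [RCLike 𝕜] {E : Type*} [NormedAddCommGroup E] [NormedSpace 𝕜 E]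
    [CompleteSpace E] (T : E →L[𝕜] E)
    (hker : FiniteDimensional 𝕜 (LinearMap.ker (T : E →ₗ[𝕜] E)))
    (hcoker : FiniteDimensional 𝕜 (E ⧸ LinearMap.range (T : E →ₗ[𝕜] E)))
    (hind : Module.finrank 𝕜 (LinearMap.ker (T : E →ₗ[𝕜] E)) = Module.finrank 𝕜 (E ⧸ LinearMap.range (T : E →ₗ[𝕜] E))) :
    ∀ ε > 0, ∃ S : E →L[𝕜] E,
      (∃ S' : E →L[𝕜] E, S * S' = 1 ∧ S' * S = 1) ∧ ‖T - S‖ < ε := by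
  intro ε hε
  -- Continuous projection onto the (finite-dimensional, hence closed complemented) kernel.
  obtain ⟨P, hP⟩ := Submodule.ClosedComplemented.of_finiteDimensional (LinearMap.ker (T : E →ₗ[𝕜] E))
  -- An algebraic complement `N` of the range.
  obtain ⟨N, hN⟩ := Submodule.exists_isCompl (LinearMap.range (T : E →ₗ[𝕜] E))
  -- `N` is isomorphic to the quotient, hence finite dimensional of the same dimension as ker T.
  have eqvN : (E ⧸ LinearMap.range (T : E →ₗ[𝕜] E)) ≃ₗ[𝕜] N :=
    Submodule.quotientEquivOfIsCompl _ _ hN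
  haveI : FiniteDimensional 𝕜 N := Module.Finite.equiv eqvN
  have hrank : Module.finrank 𝕜 (LinearMap.ker (T : E →ₗ[𝕜] E)) = Module.finrank 𝕜 N := by
    rw [hind]; exact eqvN.finrank_eq
  -- A linear isomorphism between the kernel and N; it is continuous since the kernel is f.d.
  let J : (LinearMap.ker (T : E →ₗ[𝕜] E)) ≃ₗ[𝕜] N := LinearEquiv.ofFinrankEq _ _ hrank
  let Jc : (LinearMap.ker (T : E →ₗ[𝕜] E)) →L[𝕜] N := LinearMap.toContinuousLinearMap J.toLinearMap
  let C : E →L[𝕜] E := N.subtypeL.comp (Jc.comp P)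
  -- choose a small positive scalar δ
  set δ : ℝ := ε / (‖C‖ + 1) with hδdef
  have hCpos : (0:ℝ) < ‖C‖ + 1 := by positivity
  have hδ : 0 < δ := div_pos hε hCpos
  have hδne : (δ : 𝕜) ≠ 0 := by
    simpa using ne_of_gt hδ
  set S : E →L[𝕜] E := T + (δ : 𝕜) • C with hSdef
  have hCarr : ∀ x : E, C x = (J (P x) : E) := fun x => rfl
  -- injectivity
  have hinj : LinearMap.ker (S : E →ₗ[𝕜] E) = ⊥ := by
    rw [LinearMap.ker_eq_bot']
    intro x hx
    have hx' : T x + (δ : 𝕜) • (J (P x) : E) = 0 := by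
      simpa [S, hCarr] using hx
    have hmem : T x ∈ LinearMap.range (T : E →ₗ[𝕜] E) ⊓ N := by
      constructor
      · exact ⟨x, rfl⟩
      · have : T x = -((δ : 𝕜) • (J (P x) : E)) := eq_neg_of_add_eq_zero_left hx'
        rw [this]
        exact N.neg_mem (N.smul_mem _ (J (P x)).2)
    have hT0 : T x = 0 := by
      have := hN.inf_eq_bot ▸ hmem
      simpa using this
    have hx0 : (δ : 𝕜) • (J (P x) : E) = 0 := by
      rw [hT0] at hx'; simpa using hx'
    have hJ0 : (J (P x) : E) = 0 := by
      rcases smul_eq_zero.mp hx0 with h | h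
      · exact absurd h hδne
      · exact h
    have hPx0 : P x = 0 := by
      have : J (P x) = 0 := Subtype.ext hJ0
      simpa using J.injective (by simpa using this)
    -- x ∈ ker T and P x = 0 imply x = 0
    have hxker : x ∈ LinearMap.ker (T : E →ₗ[𝕜] E) := hT0
    have := hP ⟨x, hxker⟩
    rw [show ((⟨x, hxker⟩ : LinearMap.ker (T : E →ₗ[𝕜] E)) : E) = x from rfl] at this
    rw [hPx0] at this
    simpa using this.symm
  -- surjectivity
  have hsurj : LinearMap.range (S : E →ₗ[𝕜] E) = ⊤ := by
    rw [LinearMap.range_eq_top]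
    intro y
    obtain ⟨r, n, hr, hn, hrn⟩ := Submodule.codisjoint_iff_exists_add_eq.mp hN.codisjoint y
    obtain ⟨x, hx⟩ := hr
    obtain ⟨k, hk⟩ := J.surjective ((δ : 𝕜)⁻¹ • ⟨n, hn⟩)
    refine ⟨x - ((P x : E)) + (k : E), ?_⟩
    have hPz : P (x - ((P x : E)) + (k : E)) = k := by
      have h1 := hP (P x)
      have h2 := hP k
      simp [map_sub, map_add, h1, h2]
    have hTz : T (x - ((P x : E)) + (k : E)) = T x := by
      have h1 : T ((P x : E)) = 0 := (P x).2
      have h2 : T ((k : E)) = 0 := k.2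
      simp [map_sub, map_add, h1, h2]
    have : S (x - ((P x : E)) + (k : E)) = T x + (δ : 𝕜) • (J k : E) := by
      simp [S, hCarr, hPz, hTz]
    change S (x - ((P x : E)) + (k : E)) = y
    change T x = r at hx
    rw [this, hk, hx, Submodule.coe_smul, smul_smul, mul_inv_cancel₀ hδne, one_smul]
    simpa using hrn
  -- S is invertible by the open mapping theorem
  let e : E ≃L[𝕜] E := ContinuousLinearEquiv.ofBijective S hinj hsurj
  refine ⟨S, ⟨(e.symm : E →L[𝕜] E), ?_, ?_⟩, ?_⟩
  · ext x
    have : S = (e : E →L[𝕜] E) := rfl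
    simp [this, ContinuousLinearMap.mul_apply]
  · ext x
    have : S = (e : E →L[𝕜] E) := rfl
    simp [this, ContinuousLinearMap.mul_apply]
  · have : T - S = -((δ : 𝕜) • C) := by rw [hSdef]; abel
    rw [this, norm_neg, norm_smul ((δ:𝕜)) C]
    have hnd : ‖(δ : 𝕜)‖ = δ := by
      rw [RCLike.norm_ofReal, abs_of_pos hδ]
    rw [hnd, hδdef]
    calc ε / (‖C‖ + 1) * ‖C‖ < ε / (‖C‖ + 1) * (‖C‖ + 1) := by
          exact mul_lt_mul_of_pos_left (by linarith) hδ
      _ = ε := div_mul_cancel₀ ε (ne_of_gt hCpos)
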